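/- For g = [[a,b],[c,d]] ∈ U(p,q) and z, u ∈ B_{p,q}, writing z^[g] = (a+zc)^{-1}(b+zd) and u^[g] = (a+uc)^{-1}(b+ud), one has the identity 1 - z^[g]·(u^[g])* = (a+zc)^{-1}·(1 - zu*)·(a* + c*u*)^{-1}. -/
import Mathlib


open Matrix
open scoped ComplexOrder

private lemma isUnit_of_posDef_mul_conjTranspose {n : ℕ}
    {A : Matrix (Fin n) (Fin n) ℂ} (h : (A * Aᴴ).PosDef) : IsUnit A := by
  have hd : IsUnit (A * Aᴴ).det := h.isUnit.map (Matrix.detMonoidHom)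
  rw [Matrix.det_mul] at hd
  exact (Matrix.isUnit_iff_isUnit_det A).2 (isUnit_of_mul_isUnit_left hd)

/-- The fundamental identity
`1 - z^[g] (u^[g])* = (a+zc)⁻¹ (1 - zu*) (a* + c*u*)⁻¹`
for the linear-fractional action of `U(p,q)` on the matrix ball `B_{p,q}`. -/
theorem one_sub_mobius_mul_conjTranspose {p q : ℕ} (hpq : p ≤ q)
    (a : Matrix (Fin p) (Fin p) ℂ) (b : Matrix (Fin p) (Fin q) ℂ)
    (c : Matrix (Fin q) (Fin p) ℂ) (d : Matrix (Fin q) (Fin q) ℂ)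
    (hg : fromBlocks a b c d *
        fromBlocks (1 : Matrix (Fin p) (Fin p) ℂ) 0 0 (-1 : Matrix (Fin q) (Fin q) ℂ) *
        (fromBlocks a b c d)ᴴ =
      fromBlocks (1 : Matrix (Fin p) (Fin p) ℂ) 0 0 (-1 : Matrix (Fin q) (Fin q) ℂ))
    (z u : Matrix (Fin p) (Fin q) ℂ)
    (hz : ((1 : Matrix (Fin p) (Fin p) ℂ) - z * zᴴ).PosDef)
    (hu : ((1 : Matrix (Fin p) (Fin p) ℂ) - u * uᴴ).PosDef) :
    (1 : Matrix (Fin p) (Fin p) ℂ) -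
      ((a + z * c)⁻¹ * (b + z * d)) * ((a + u * c)⁻¹ * (b + u * d))ᴴ =
    (a + z * c)⁻¹ * ((1 : Matrix (Fin p) (Fin p) ℂ) - z * uᴴ) * (aᴴ + cᴴ * uᴴ)⁻¹ := by
  rw [Matrix.fromBlocks_conjTranspose, Matrix.fromBlocks_multiply,
    Matrix.fromBlocks_multiply] at hg
  simp only [Matrix.mul_one, Matrix.mul_zero, Matrix.zero_mul, add_zero, zero_add] at hg
  simp only [Matrix.mul_neg, Matrix.mul_one, Matrix.neg_mul] at hg
  rw [Matrix.fromBlocks_inj] at hg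
  obtain ⟨h1', h2', h3', h4'⟩ := hg
  have h1 : a * aᴴ - b * bᴴ = 1 := by rw [sub_eq_add_neg]; exact h1'
  have h2 : a * cᴴ - b * dᴴ = 0 := by rw [sub_eq_add_neg]; exact h2'
  have h4 : c * cᴴ - d * dᴴ = -1 := by rw [sub_eq_add_neg]; exact h4'
  have e1 : a * aᴴ = 1 + b * bᴴ := sub_eq_iff_eq_add.mp h1
  have e2 : a * cᴴ = b * dᴴ := sub_eq_zero.mp h2
  have e2' : c * aᴴ = d * bᴴ := by
    calc c * aᴴ = (a * cᴴ)ᴴ := by simp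
      _ = (b * dᴴ)ᴴ := by rw [e2]
      _ = d * bᴴ := by simp
  have e4 : c * cᴴ = d * dᴴ - 1 := by
    have := sub_eq_iff_eq_add.mp h4
    rw [this]; abel
  have key : ∀ w : Matrix (Fin p) (Fin q) ℂ,
      (a + w * c) * (a + w * c)ᴴ = (1 - w * wᴴ) + (b + w * d) * (b + w * d)ᴴ := by
    intro w
    simp only [Matrix.conjTranspose_add, Matrix.conjTranspose_mul]
    calc (a + w * c) * (aᴴ + cᴴ * wᴴ)
        = a * aᴴ + (a * cᴴ) * wᴴ + w * (c * aᴴ) + w * (c * cᴴ) * wᴴ := by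
          simp only [Matrix.add_mul, Matrix.mul_add, Matrix.mul_assoc]; abel
      _ = (1 + b * bᴴ) + (b * dᴴ) * wᴴ + w * (d * bᴴ) + w * (d * dᴴ - 1) * wᴴ := by
          rw [e1, e2, e2', e4]
      _ = (1 - w * wᴴ) + (b + w * d) * (bᴴ + dᴴ * wᴴ) := by
          simp only [Matrix.add_mul, Matrix.mul_add, Matrix.sub_mul, Matrix.mul_sub, Matrix.mul_assoc, Matrix.mul_one, Matrix.one_mul]; abel
  have hAz : IsUnit (a + z * c) :=
    isUnit_of_posDef_mul_conjTranspose ((key z ▸ hz.add_posSemidef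
      (Matrix.posSemidef_self_mul_conjTranspose _)))
  have hAu : IsUnit (a + u * c) :=
    isUnit_of_posDef_mul_conjTranspose ((key u ▸ hu.add_posSemidef
      (Matrix.posSemidef_self_mul_conjTranspose _)))
  set A := a + z * c with hA
  set B := a + u * c with hB
  set N := b + z * d with hN
  set M := b + u * d with hM
  have hBH : aᴴ + cᴴ * uᴴ = Bᴴ := by
    rw [hB]; simp [Matrix.conjTranspose_add, Matrix.conjTranspose_mul]
  have central : A * Bᴴ - N * Mᴴ = 1 - z * uᴴ := by
    rw [hA, hB, hN, hM]
    simp only [Matrix.conjTranspose_add, Matrix.conjTranspose_mul]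
    calc (a + z * c) * (aᴴ + cᴴ * uᴴ) - (b + z * d) * (bᴴ + dᴴ * uᴴ)
        = (a * aᴴ - b * bᴴ) + (a * cᴴ - b * dᴴ) * uᴴ + z * (c * aᴴ - d * bᴴ)
            + z * (c * cᴴ - d * dᴴ) * uᴴ := by
          simp only [Matrix.add_mul, Matrix.mul_add, Matrix.sub_mul, Matrix.mul_sub, Matrix.mul_assoc]; abel
      _ = 1 - z * uᴴ := by
          rw [h1, h2, sub_eq_zero.mpr e2', show c * cᴴ - d * dᴴ = -1 from h4]
          simp only [Matrix.zero_mul, Matrix.mul_zero, Matrix.mul_neg, Matrix.mul_one, Matrix.neg_mul]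
          abel
  have hdA : IsUnit A.det := (Matrix.isUnit_iff_isUnit_det A).1 hAz
  have hdB : IsUnit B.det := (Matrix.isUnit_iff_isUnit_det B).1 hAu
  have hAinv : A⁻¹ * A = 1 := Matrix.nonsing_inv_mul _ hdA
  have hBHinv : (Bᴴ)⁻¹ = (B⁻¹)ᴴ := (Matrix.conjTranspose_nonsing_inv B).symm
  rw [hBH, hBHinv]
  have hBHinvmul : Bᴴ * (B⁻¹)ᴴ = 1 := by
    rw [← Matrix.conjTranspose_mul, Matrix.nonsing_inv_mul _ hdB]; simp
  calc 1 - A⁻¹ * N * (B⁻¹ * M)ᴴ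
      = A⁻¹ * (A * Bᴴ - N * Mᴴ) * (B⁻¹)ᴴ := by
        rw [Matrix.conjTranspose_mul, Matrix.mul_sub, Matrix.sub_mul]
        have hstep : A⁻¹ * (A * Bᴴ) * (B⁻¹)ᴴ = (A⁻¹ * A) * (Bᴴ * (B⁻¹)ᴴ) := by
          simp only [Matrix.mul_assoc]
        rw [hstep, hAinv, hBHinvmul, Matrix.one_mul]
        simp only [Matrix.mul_assoc]
    _ = A⁻¹ * (1 - z * uᴴ) * (B⁻¹)ᴴ := by rw [central]
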